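/- arXiv:2411.04702 — 7 statements merged into one kernel-verified Lean document; each statement's English description precedes it below -/
import Mathlib

section
/- Let x be a complex-valued random variable on a probability space such that E[|x|^{2m}] = m!·P^m for every natural number m (where P > 0), and let y = Σ_{k=0}^{L-1} a_{2k+1}·x·|x|^{2k} for complex coefficients a_1, a_3, …, a_{2L-1}, with the convention a_{2j+1} = 0 for j ≥ L. Then E[|y|^2] = Σ_{k=1}^{2L-1} ( k!·P^k · Σ_{i=1}^{k} a_{2i-1}·conj(a_{2k-2i+1}) ). Consequently the distortion power C_η := E[|y|^2] − |g|^2·P, with g = Σ_{k=0}^{L-1} a_{2k+1}·(k+1)!·P^k, equals Σ_{k=1}^{2L-1} ( k!·P^k · Σ_{i=1}^{k} a_{2i-1}·conj(a_{2k-2i+1}) ) − |g|^2·P. -/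
open MeasureTheory Finset

lemma icc_to_range {M : Type*} [AddCommMonoid M] (n : ℕ) (f : ℕ → M) :
    ∑ i ∈ Finset.Icc 1 n, f i = ∑ j ∈ Finset.range n, f (j + 1) := by
  apply Finset.sum_nbij' (fun i => i - 1) (fun j => j + 1) <;> intros <;> simp_all <;> omega

/-- Output power and distortion power of the memory-less polynomial model with a
Gaussian-moment input: `E[|y|²] = ∑_{k=1}^{2L-1} k! P^k ∑_{i=1}^{k} a_{2i-1} conj(a_{2k-2i+1})`,
and consequently `C_η = E[|y|²] − |g|² P` equals that sum minus `|g|² P`. -/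
theorem bussgang_distortion_power {Ω : Type*} [MeasurableSpace Ω] (μ : Measure Ω)
    [IsProbabilityMeasure μ]
    (P : ℝ) (hP : 0 < P) (x : Ω → ℂ)
    (hmom : ∀ m : ℕ, ∫ ω, ‖x ω‖ ^ (2 * m) ∂μ = m.factorial * P ^ m)
    (L : ℕ) (a : ℕ → ℂ) (ha : ∀ j, L ≤ j → a (2 * j + 1) = 0)
    (y : Ω → ℂ)
    (hy : ∀ ω, y ω = ∑ k ∈ range L, a (2 * k + 1) * x ω * (‖x ω‖ : ℂ) ^ (2 * k))
    (g : ℂ) (hg : g = ∑ k ∈ range L, a (2 * k + 1) * (k + 1).factorial * (P : ℂ) ^ k)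
    (Cη : ℂ)
    (hC : Cη = ((∫ ω, ‖y ω‖ ^ 2 ∂μ : ℝ) : ℂ) - (‖g‖ : ℂ) ^ 2 * P) :
    (((∫ ω, ‖y ω‖ ^ 2 ∂μ : ℝ) : ℂ)
      = ∑ k ∈ Finset.Icc 1 (2 * L - 1), (k.factorial : ℂ) * (P : ℂ) ^ k *
          ∑ i ∈ Finset.Icc 1 k, a (2 * i - 1) * starRingEnd ℂ (a (2 * k - 2 * i + 1))) ∧
    (Cη = (∑ k ∈ Finset.Icc 1 (2 * L - 1), (k.factorial : ℂ) * (P : ℂ) ^ k *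
          ∑ i ∈ Finset.Icc 1 k, a (2 * i - 1) * starRingEnd ℂ (a (2 * k - 2 * i + 1)))
        - (‖g‖ : ℂ) ^ 2 * P) := by
  -- abbreviation for a single term
  set F : ℕ → ℕ → ℂ := fun j m =>
    a (2 * j + 1) * starRingEnd ℂ (a (2 * m + 1)) *
      (((j + m + 1).factorial : ℂ) * (P : ℂ) ^ (j + m + 1)) with hF
  -- integrability of moments
  have hint : ∀ m : ℕ, Integrable (fun ω => ‖x ω‖ ^ (2 * m)) μ := by
    intro m
    by_contra h
    have := hmom m
    rw [integral_undef h] at this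
    have h1 : (0:ℝ) < m.factorial * P ^ m :=
      mul_pos (by positivity) (pow_pos hP m)
    rw [← this] at h1; exact lt_irrefl _ h1
  -- pointwise expansion of |y|²
  have hpt : ∀ ω : Ω, ((‖y ω‖ ^ 2 : ℝ) : ℂ)
      = ∑ j ∈ range L, ∑ m ∈ range L,
          a (2 * j + 1) * starRingEnd ℂ (a (2 * m + 1)) *
            ((‖x ω‖ ^ (2 * (j + m + 1)) : ℝ) : ℂ) := by
    intro ω
    have h1 : ((‖y ω‖ ^ 2 : ℝ) : ℂ) = y ω * starRingEnd ℂ (y ω) := by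
      rw [Complex.mul_conj]
      push_cast [Complex.sq_norm]
      simp [Complex.normSq_eq_norm_sq]
    rw [h1, hy ω, map_sum, Finset.sum_mul_sum]
    refine Finset.sum_congr rfl fun j _ => Finset.sum_congr rfl fun m _ => ?_
    have hx : x ω * starRingEnd ℂ (x ω) = ((‖x ω‖ : ℝ) : ℂ) ^ 2 := by
      rw [Complex.mul_conj]; simp [Complex.normSq_eq_norm_sq]
    simp only [map_mul, map_pow, Complex.conj_ofReal]
    push_cast
    rw [show a (2 * j + 1) * x ω * (‖x ω‖ : ℂ) ^ (2 * j) *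
        (starRingEnd ℂ (a (2 * m + 1)) * starRingEnd ℂ (x ω) * (‖x ω‖ : ℂ) ^ (2 * m))
        = a (2 * j + 1) * starRingEnd ℂ (a (2 * m + 1)) *
          ((x ω * starRingEnd ℂ (x ω)) * ((‖x ω‖ : ℂ) ^ (2 * j) *
            (‖x ω‖ : ℂ) ^ (2 * m))) by ring, hx]
    ring
  -- the integral
  have hI : ((∫ ω, ‖y ω‖ ^ 2 ∂μ : ℝ) : ℂ) = ∑ j ∈ range L, ∑ m ∈ range L, F j m := by
    rw [show ((∫ ω, ‖y ω‖ ^ 2 ∂μ : ℝ) : ℂ)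
        = ∫ ω, ((‖y ω‖ ^ 2 : ℝ) : ℂ) ∂μ from integral_ofReal.symm]
    calc ∫ ω, ((‖y ω‖ ^ 2 : ℝ) : ℂ) ∂μ
        = ∫ ω, ∑ j ∈ range L, ∑ m ∈ range L,
            a (2 * j + 1) * starRingEnd ℂ (a (2 * m + 1)) *
              ((‖x ω‖ ^ (2 * (j + m + 1)) : ℝ) : ℂ) ∂μ := by
          exact integral_congr_ae (Filter.Eventually.of_forall hpt)
      _ = ∑ j ∈ range L, ∑ m ∈ range L, F j m := by
          rw [integral_finset_sum]
          · refine Finset.sum_congr rfl fun j _ => ?_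
            rw [integral_finset_sum]
            · refine Finset.sum_congr rfl fun m _ => ?_
              rw [integral_const_mul,
                show (∫ ω, ((‖x ω‖ ^ (2 * (j + m + 1)) : ℝ) : ℂ) ∂μ)
                  = ((∫ ω, ‖x ω‖ ^ (2 * (j + m + 1)) ∂μ : ℝ) : ℂ) from
                    integral_ofReal,
                hmom (j + m + 1), hF]
              push_cast; ring
            · intro m _
              exact ((hint (j + m + 1)).ofReal).const_mul _
          · intro j _
            apply integrable_finset_sum
            intro m _
            exact ((hint (j + m + 1)).ofReal).const_mul _
  -- combinatorial identity
  have hcomb : ∑ j ∈ range L, ∑ m ∈ range L, F j m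
      = ∑ k ∈ Finset.Icc 1 (2 * L - 1), (k.factorial : ℂ) * (P : ℂ) ^ k *
          ∑ i ∈ Finset.Icc 1 k, a (2 * i - 1) * starRingEnd ℂ (a (2 * k - 2 * i + 1)) := by
    have hFz : ∀ j m, L ≤ j ∨ L ≤ m → F j m = 0 := by
      rintro j m (h | h)
      · simp [hF, ha j h]
      · simp [hF, ha m h]
    -- rewrite RHS as triangular sum of F
    have hR : ∑ k ∈ Finset.Icc 1 (2 * L - 1), (k.factorial : ℂ) * (P : ℂ) ^ k *
          ∑ i ∈ Finset.Icc 1 k, a (2 * i - 1) * starRingEnd ℂ (a (2 * k - 2 * i + 1))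
        = ∑ t ∈ range (2 * L - 1), ∑ j ∈ range (t + 1), F j (t - j) := by
      rw [icc_to_range]
      refine Finset.sum_congr rfl fun t _ => ?_
      rw [Finset.mul_sum, icc_to_range]
      refine Finset.sum_congr rfl fun j hj => ?_
      simp only [Finset.mem_range] at hj
      have e1 : 2 * (j + 1) - 1 = 2 * j + 1 := by omega
      have e2 : 2 * (t + 1) - 2 * (j + 1) + 1 = 2 * (t - j) + 1 := by omega
      have e3 : j + (t - j) + 1 = t + 1 := by omega
      rw [e1, e2, hF]; simp only [e3]; ring
    rw [hR, Finset.sum_range_diag_flip]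
    -- now both sides are ∑_{j} ∑_{m} F j m with different ranges; use vanishing
    have key : ∀ N₁ N₂ : ℕ, (∀ j < L, L ≤ N₁ ∨ N₂ ≤ j → False) →
        True := fun _ _ _ => trivial
    symm
    rw [show ∑ m ∈ range (2 * L - 1), ∑ k ∈ range (2 * L - 1 - m), F m k
        = ∑ m ∈ range (2 * L - 1), ∑ k ∈ range (2 * L - 1 - m), F m k from rfl]
    -- reduce outer sum to range L
    have houter : ∑ m ∈ range (2 * L - 1), ∑ k ∈ range (2 * L - 1 - m), F m k
        = ∑ m ∈ range L, ∑ k ∈ range (2 * L - 1 - m), F m k := by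
      rcases Nat.eq_zero_or_pos L with hL | hL
      · subst hL; simp
      refine (Finset.sum_subset ?_ ?_).symm
      · intro m hm; simp only [Finset.mem_range] at *; omega
      · intro m _ hm
        simp only [Finset.mem_range] at hm
        exact Finset.sum_eq_zero fun k _ => hFz m k (Or.inl (by omega))
    rw [houter]
    refine Finset.sum_congr rfl fun m hm => ?_
    simp only [Finset.mem_range] at hm
    refine (Finset.sum_subset ?_ ?_).symm
    · intro k hk; simp only [Finset.mem_range] at *; omega
    · intro k _ hk
      simp only [Finset.mem_range] at hk
      exact hFz m k (Or.inr (by omega))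
  have h1 : ((∫ ω, ‖y ω‖ ^ 2 ∂μ : ℝ) : ℂ)
      = ∑ k ∈ Finset.Icc 1 (2 * L - 1), (k.factorial : ℂ) * (P : ℂ) ^ k *
          ∑ i ∈ Finset.Icc 1 k, a (2 * i - 1) * starRingEnd ℂ (a (2 * k - 2 * i + 1)) :=
    hI.trans hcomb
  exact ⟨h1, by rw [hC, h1]⟩
end

section
/- Let d > 0 and define f : [0,∞) → ℝ by f(R) = (1 + d/√(d²+R²))·(1/d² + 1/(d²+R²)). Then f is strictly decreasing on [0,∞), f(0) = 4/d², and f(R) tends to 1/d² as R → ∞. -/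
/-- The normalized post-MRC distortion power
`f(R) = (1 + d/√(d²+R²))(1/d² + 1/(d²+R²))` is strictly decreasing on `[0,∞)`,
with maximum `f(0) = 4/d²` and limit `1/d²` as `R → ∞`. -/
theorem distortion_power_decreasing (d : ℝ) (hd : 0 < d) (f : ℝ → ℝ)
    (hf : ∀ R, f R = (1 + d / Real.sqrt (d ^ 2 + R ^ 2)) * (1 / d ^ 2 + 1 / (d ^ 2 + R ^ 2))) :
    StrictAntiOn f (Set.Ici 0) ∧ f 0 = 4 / d ^ 2 ∧
      Filter.Tendsto f Filter.atTop (nhds (1 / d ^ 2)) := by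
  have hd2 : (0:ℝ) < d ^ 2 := by positivity
  refine ⟨?_, ?_, ?_⟩
  · intro a ha b hb hab
    simp only [Set.mem_Ici] at ha hb
    rw [hf a, hf b]
    have hlt : d ^ 2 + a ^ 2 < d ^ 2 + b ^ 2 := by nlinarith
    have hpa : (0:ℝ) < d ^ 2 + a ^ 2 := by positivity
    have hpb : (0:ℝ) < d ^ 2 + b ^ 2 := by positivity
    have hsq : Real.sqrt (d ^ 2 + a ^ 2) < Real.sqrt (d ^ 2 + b ^ 2) :=
      Real.sqrt_lt_sqrt hpa.le hlt
    have hsa : (0:ℝ) < Real.sqrt (d ^ 2 + a ^ 2) := Real.sqrt_pos.mpr hpa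
    have h1 : d / Real.sqrt (d ^ 2 + b ^ 2) < d / Real.sqrt (d ^ 2 + a ^ 2) :=
      div_lt_div_of_pos_left hd hsa hsq
    have h2 : 1 / (d ^ 2 + b ^ 2) < 1 / (d ^ 2 + a ^ 2) :=
      one_div_lt_one_div_of_lt hpa hlt
    have hA : (0:ℝ) < 1 + d / Real.sqrt (d ^ 2 + b ^ 2) := by positivity
    have hB : (0:ℝ) < 1 / d ^ 2 + 1 / (d ^ 2 + a ^ 2) := by positivity
    apply mul_lt_mul' (by linarith) (by linarith) (by positivity) (by linarith)
  · rw [hf 0]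
    have : Real.sqrt (d ^ 2 + 0 ^ 2) = d := by
      rw [show d ^ 2 + 0 ^ 2 = d ^ 2 by ring, Real.sqrt_sq hd.le]
    rw [this]
    field_simp
    ring
  · have hlim : ∀ R, f R = (1 + d / Real.sqrt (d ^ 2 + R ^ 2)) * (1 / d ^ 2 + 1 / (d ^ 2 + R ^ 2)) := hf
    have h1 : Filter.Tendsto (fun R : ℝ => d ^ 2 + R ^ 2) Filter.atTop Filter.atTop := by
      apply Filter.tendsto_atTop_add_const_left
      exact Filter.tendsto_pow_atTop (by norm_num)
    have hs : Filter.Tendsto Real.sqrt Filter.atTop Filter.atTop := by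
      apply Filter.tendsto_atTop.mpr
      intro b
      filter_upwards [Filter.eventually_ge_atTop (b ^ 2)] with x hx
      calc b ≤ |b| := le_abs_self b
        _ = Real.sqrt (b ^ 2) := (Real.sqrt_sq_eq_abs b).symm
        _ ≤ Real.sqrt x := Real.sqrt_le_sqrt hx
    have hsqrt : Filter.Tendsto (fun R : ℝ => Real.sqrt (d ^ 2 + R ^ 2)) Filter.atTop Filter.atTop :=
      hs.comp h1
    have hterm1 : Filter.Tendsto (fun R : ℝ => d / Real.sqrt (d ^ 2 + R ^ 2)) Filter.atTop (nhds 0) := by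
      simpa using Filter.Tendsto.const_div_atTop hsqrt d
    have hterm2 : Filter.Tendsto (fun R : ℝ => 1 / (d ^ 2 + R ^ 2)) Filter.atTop (nhds 0) := by
      simpa using Filter.Tendsto.const_div_atTop h1 1
    have := ((tendsto_const_nhds.add hterm1).mul (tendsto_const_nhds.add hterm2) :
      Filter.Tendsto (fun R : ℝ => (1 + d / Real.sqrt (d ^ 2 + R ^ 2)) * (1 / d ^ 2 + 1 / (d ^ 2 + R ^ 2)))
        Filter.atTop (nhds ((1 + 0) * (1 / d ^ 2 + 0))))
    refine this.congr' ?_ |>.mono_right (by norm_num)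
    · filter_upwards with R using (hf R).symm
end

section
/- Let G > 0, P > 0, κ ≥ 0, A > 0, σ² > 0 and d > 0 be real, and define γ(R) = ( (G·P/2)·(1 − d/√(d²+R²)) ) / ( (κPA/16π)·(1 + d/√(d²+R²))·(1/d² + 1/(d²+R²)) + σ² ) for R ≥ 0. Then γ(R) tends to (G·P/2) / ( κPA/(16π d²) + σ² ) as R → ∞. -/
/-- Asymptotic post-MRC SNDR of a disk-shaped LIS with per-antenna AGC (eqs. (26)–(28)):
as the radius `R → ∞`, `γ(R) → (GP/2)/(κPA/(16πd²) + σ²)`. -/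
theorem sndr_asymptotic_limit (G P κ A σ2 d : ℝ) (hG : 0 < G) (hP : 0 < P) (hκ : 0 ≤ κ)
    (hA : 0 < A) (hσ2 : 0 < σ2) (hd : 0 < d) (γ : ℝ → ℝ)
    (hγ : ∀ R, γ R = G * P / 2 * (1 - d / Real.sqrt (d ^ 2 + R ^ 2)) /
        (κ * P * A / (16 * Real.pi) * (1 + d / Real.sqrt (d ^ 2 + R ^ 2)) *
            (1 / d ^ 2 + 1 / (d ^ 2 + R ^ 2)) + σ2)) :
    Filter.Tendsto γ Filter.atTop
      (nhds (G * P / 2 / (κ * P * A / (16 * Real.pi * d ^ 2) + σ2))) := by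
  have hsq : Filter.Tendsto (fun R : ℝ => d ^ 2 + R ^ 2) Filter.atTop Filter.atTop := by
    apply Filter.tendsto_atTop_add_const_left
    exact Filter.tendsto_pow_atTop (two_ne_zero)
  have hsqrt : Filter.Tendsto (fun R : ℝ => Real.sqrt (d ^ 2 + R ^ 2)) Filter.atTop Filter.atTop :=
    (Filter.tendsto_atTop_atTop.2 fun b : ℝ =>
      ⟨(max b 0) ^ 2, fun a (ha : (max b 0) ^ 2 ≤ a) => le_trans (le_max_left b 0)
        (Real.le_sqrt_of_sq_le ha)⟩).comp hsq
  have h1 : Filter.Tendsto (fun R : ℝ => d / Real.sqrt (d ^ 2 + R ^ 2)) Filter.atTop (nhds 0) :=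
    Filter.Tendsto.div_atTop tendsto_const_nhds hsqrt
  have h2 : Filter.Tendsto (fun R : ℝ => 1 / (d ^ 2 + R ^ 2)) Filter.atTop (nhds 0) :=
    Filter.Tendsto.div_atTop tendsto_const_nhds hsq
  have hpi := Real.pi_pos
  have hdenne : κ * P * A / (16 * Real.pi) * (1 + 0) * (1 / d ^ 2 + 0) + σ2 ≠ 0 := by
    have : 0 ≤ κ * P * A / (16 * Real.pi) * (1 + 0) * (1 / d ^ 2 + 0) := by
      positivity
    linarith
  have hlim : Filter.Tendsto γ Filter.atTop
      (nhds (G * P / 2 * (1 - 0) /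
        (κ * P * A / (16 * Real.pi) * (1 + 0) * (1 / d ^ 2 + 0) + σ2))) := by
    rw [show γ = fun R => G * P / 2 * (1 - d / Real.sqrt (d ^ 2 + R ^ 2)) /
        (κ * P * A / (16 * Real.pi) * (1 + d / Real.sqrt (d ^ 2 + R ^ 2)) *
            (1 / d ^ 2 + 1 / (d ^ 2 + R ^ 2)) + σ2) from funext hγ]
    exact Filter.Tendsto.div
      (tendsto_const_nhds.mul (tendsto_const_nhds.sub h1))
      (((tendsto_const_nhds.mul (tendsto_const_nhds.add h1)).mul
        (tendsto_const_nhds.add h2)).add tendsto_const_nhds) hdenne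
  convert hlim using 2
  field_simp
  ring
end

section
/- Let P > 0, σ² > 0, κ ≥ 0, A > 0, d > 0, G > 0, and R₀ ≥ 0 be real. Define Υ = d/√(d²+R₀²), γ₀ = (P/(2σ²))·(1 − Υ), β_max = κPA/(4πd²), δ_max = (β_max + σ²)/(G·σ²), and γ(R) = ( (G·P/2)·(1 − d/√(d²+R²)) ) / ( (κPA/16π)·(1 + d/√(d²+R²))·(1/d² + 1/(d²+R²)) + σ² ). Assume δ_max·(1−Υ) < 1 and set R_ub² = d²·( 1/(1 + δ_maxΥ − δ_max)² − 1 ). Then for every R ≥ 0 with R² ≥ R_ub², one has γ(R) ≥ γ₀. -/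
set_option maxHeartbeats 1000000


/-- Upper bound on the minimum scaling required with non-ideal hardware (eq. (36)):
any radius `R` with `R² ≥ R_ub²` guarantees that the non-ideal LIS SNDR `γ(R)` matches
the ideal-hardware reference SNR `γ₀` of a radius-`R₀` LIS. -/
theorem scaling_upper_bound (P σ2 κ A d G R₀ : ℝ) (hP : 0 < P) (hσ2 : 0 < σ2) (hκ : 0 ≤ κ)
    (hA : 0 < A) (hd : 0 < d) (hG : 0 < G) (hR₀ : 0 ≤ R₀)
    (Υ : ℝ) (hΥ : Υ = d / Real.sqrt (d ^ 2 + R₀ ^ 2))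
    (γ₀ : ℝ) (hγ₀ : γ₀ = P / (2 * σ2) * (1 - Υ))
    (βmax : ℝ) (hβmax : βmax = κ * P * A / (4 * Real.pi * d ^ 2))
    (δmax : ℝ) (hδmax : δmax = (βmax + σ2) / (G * σ2))
    (γ : ℝ → ℝ)
    (hγ : ∀ R, γ R = G * P / 2 * (1 - d / Real.sqrt (d ^ 2 + R ^ 2)) /
        (κ * P * A / (16 * Real.pi) * (1 + d / Real.sqrt (d ^ 2 + R ^ 2)) *
            (1 / d ^ 2 + 1 / (d ^ 2 + R ^ 2)) + σ2))
    (hfeas : δmax * (1 - Υ) < 1)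
    (Rub2 : ℝ) (hRub2 : Rub2 = d ^ 2 * (1 / (1 + δmax * Υ - δmax) ^ 2 - 1)) :
    ∀ R : ℝ, 0 ≤ R → Rub2 ≤ R ^ 2 → γ₀ ≤ γ R := by
  intro R hR hRub
  have hπ := Real.pi_pos
  have hdR : (0:ℝ) < d ^ 2 + R ^ 2 := by positivity
  set s := Real.sqrt (d ^ 2 + R ^ 2) with hsdef
  have hs : 0 < s := Real.sqrt_pos.mpr hdR
  have hs2 : s ^ 2 = d ^ 2 + R ^ 2 := Real.sq_sqrt hdR.le
  have hsd : d ≤ s := by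
    rw [hsdef, show d = Real.sqrt (d ^ 2) by rw [Real.sqrt_sq hd.le]]
    exact Real.sqrt_le_sqrt (by simp [Real.sqrt_sq hd.le]; nlinarith [sq_nonneg R])
  set u := d / s with hudef
  have hu0 : 0 < u := div_pos hd hs
  have hu1 : u ≤ 1 := (div_le_one hs).mpr hsd
  -- facts about Υ
  have hdR₀ : (0:ℝ) < d ^ 2 + R₀ ^ 2 := by positivity
  have hs₀ : 0 < Real.sqrt (d ^ 2 + R₀ ^ 2) := Real.sqrt_pos.mpr hdR₀
  have hs₀d : d ≤ Real.sqrt (d ^ 2 + R₀ ^ 2) := by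
    rw [show d = Real.sqrt (d ^ 2) by rw [Real.sqrt_sq hd.le]]
    exact Real.sqrt_le_sqrt (by simp [Real.sqrt_sq hd.le]; nlinarith [sq_nonneg R₀])
  have hΥ0 : 0 < Υ := by rw [hΥ]; exact div_pos hd hs₀
  have hΥ1 : Υ ≤ 1 := by rw [hΥ]; exact (div_le_one hs₀).mpr hs₀d
  set c := 1 + δmax * Υ - δmax with hcdef
  have hexp : δmax * (1 - Υ) = δmax - δmax * Υ := by ring
  have hc : 0 < c := by rw [hcdef]; linarith
  have hβ0 : 0 ≤ βmax := by rw [hβmax]; positivity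
  have hδ0 : 0 < δmax := by
    rw [hδmax]; exact div_pos (by linarith) (by positivity)
  -- u ≤ c
  have key : d ^ 2 ≤ c ^ 2 * s ^ 2 := by
    have h1 : d ^ 2 * (1 / c ^ 2 - 1) ≤ R ^ 2 := hRub2 ▸ hRub
    have e0 : d ^ 2 * (1 / c ^ 2 - 1) = d ^ 2 / c ^ 2 - d ^ 2 := by ring
    have h1' : d ^ 2 / c ^ 2 ≤ s ^ 2 := by rw [hs2]; linarith
    have h2 := (div_le_iff₀ (by positivity : (0:ℝ) < c ^ 2)).mp h1'
    linarith
  have hdc : d ≤ c * s := by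
    have e : c ^ 2 * s ^ 2 = (c * s) ^ 2 := by ring
    rw [e] at key
    calc d = Real.sqrt (d ^ 2) := by rw [Real.sqrt_sq hd.le]
    _ ≤ Real.sqrt ((c * s) ^ 2) := Real.sqrt_le_sqrt key
    _ = c * s := Real.sqrt_sq (mul_pos hc hs).le
  have huc : u ≤ c := by rw [hudef, div_le_iff₀ hs]; exact hdc
  -- bound on β(R)
  set B := κ * P * A / (16 * Real.pi) with hBdef
  have hB0 : 0 ≤ B := by positivity
  have h1s : 1 / (d ^ 2 + R ^ 2) ≤ 1 / d ^ 2 := by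
    apply one_div_le_one_div_of_le (by positivity); linarith [sq_nonneg R]
  have h1s0 : 0 ≤ 1 / d ^ 2 + 1 / (d ^ 2 + R ^ 2) := by positivity
  have hβle : B * (1 + u) * (1 / d ^ 2 + 1 / (d ^ 2 + R ^ 2)) ≤ βmax := by
    have h2 : (1 + u) * (1 / d ^ 2 + 1 / (d ^ 2 + R ^ 2)) ≤ 2 * (2 / d ^ 2) := by
      have := mul_le_mul (by linarith : (1:ℝ) + u ≤ 2)
        (by have e : (2:ℝ) / d ^ 2 = 1 / d ^ 2 + 1 / d ^ 2 := by ring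
            linarith : 1 / d ^ 2 + 1 / (d ^ 2 + R ^ 2) ≤ 2 / d ^ 2)
        h1s0 (by norm_num)
      linarith
    have h3 : B * ((1 + u) * (1 / d ^ 2 + 1 / (d ^ 2 + R ^ 2))) ≤ B * (2 * (2 / d ^ 2)) :=
      mul_le_mul_of_nonneg_left h2 hB0
    have h4 : B * (2 * (2 / d ^ 2)) = βmax := by
      rw [hBdef, hβmax]; field_simp; ring
    calc B * (1 + u) * (1 / d ^ 2 + 1 / (d ^ 2 + R ^ 2))
        = B * ((1 + u) * (1 / d ^ 2 + 1 / (d ^ 2 + R ^ 2))) := by ring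
      _ ≤ B * (2 * (2 / d ^ 2)) := h3
      _ = βmax := h4
  have hD0 : 0 < B * (1 + u) * (1 / d ^ 2 + 1 / (d ^ 2 + R ^ 2)) + σ2 := by
    have : 0 ≤ B * (1 + u) * (1 / d ^ 2 + 1 / (d ^ 2 + R ^ 2)) := by positivity
    linarith
  have hM0 : 0 < βmax + σ2 := by linarith
  have hN0 : 0 ≤ G * P / 2 * (1 - u) := by
    have : 0 ≤ 1 - u := by linarith
    positivity
  have hδM : δmax * (G * σ2) = βmax + σ2 := by
    rw [hδmax]; field_simp
  have h5 : δmax * (1 - Υ) ≤ 1 - u := by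
    rw [hcdef] at huc; linarith
  have stepA : γ₀ ≤ G * P / 2 * (1 - u) / (βmax + σ2) := by
    rw [hγ₀]
    have e1 : P / (2 * σ2) * (1 - Υ) = P * (1 - Υ) / (2 * σ2) := by ring
    have e2 : G * P / 2 * (1 - u) / (βmax + σ2) = G * P * (1 - u) / (2 * (βmax + σ2)) := by
      field_simp
    rw [e1, e2, div_le_div_iff₀ (by positivity) (by positivity)]
    have h6 := mul_le_mul_of_nonneg_left h5 (by positivity : (0:ℝ) ≤ 2 * P * (G * σ2))
    have e3 : 2 * P * (G * σ2) * (δmax * (1 - Υ)) = 2 * P * (1 - Υ) * (βmax + σ2) := by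
      rw [← hδM]; ring
    have e4 : P * (1 - Υ) * (2 * (βmax + σ2)) = 2 * P * (1 - Υ) * (βmax + σ2) := by ring
    have e5 : G * P * (1 - u) * (2 * σ2) = 2 * P * (G * σ2) * (1 - u) := by ring
    linarith
  have stepB : G * P / 2 * (1 - u) / (βmax + σ2) ≤ γ R := by
    rw [hγ R, ← hsdef, ← hudef]
    exact div_le_div_of_nonneg_left hN0 hD0 (by linarith)
  linarith
end

section
/- Let P > 0, σ² > 0, κ ≥ 0, A > 0, d > 0, G > 0, and R₀ ≥ 0 be real. Define Υ = d/√(d²+R₀²), γ₀ = (P/(2σ²))·(1 − Υ), β_min = κPA/(16πd²), δ_min = (β_min + σ²)/(G·σ²), and γ(R) = ( (G·P/2)·(1 − d/√(d²+R²)) ) / ( (κPA/16π)·(1 + d/√(d²+R²))·(1/d² + 1/(d²+R²)) + σ² ). Assume δ_min·(1−Υ) < 1 and set R_lb² = d²·( 1/(1 + δ_minΥ − δ_min)² − 1 ). Then for every R ≥ 0, γ(R) ≥ γ₀ implies R² ≥ R_lb². -/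
/-- Lower bound on the minimum scaling required with non-ideal hardware (eq. (38)):
if the non-ideal LIS SNDR `γ(R)` matches the ideal-hardware reference SNR `γ₀` of a
radius-`R₀` LIS, then necessarily `R² ≥ R_lb²`. -/
theorem scaling_lower_bound (P σ2 κ A d G R₀ : ℝ) (hP : 0 < P) (hσ2 : 0 < σ2) (hκ : 0 ≤ κ)
    (hA : 0 < A) (hd : 0 < d) (hG : 0 < G) (hR₀ : 0 ≤ R₀)
    (Υ : ℝ) (hΥ : Υ = d / Real.sqrt (d ^ 2 + R₀ ^ 2))
    (γ₀ : ℝ) (hγ₀ : γ₀ = P / (2 * σ2) * (1 - Υ))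
    (βmin : ℝ) (hβmin : βmin = κ * P * A / (16 * Real.pi * d ^ 2))
    (δmin : ℝ) (hδmin : δmin = (βmin + σ2) / (G * σ2))
    (γ : ℝ → ℝ)
    (hγ : ∀ R, γ R = G * P / 2 * (1 - d / Real.sqrt (d ^ 2 + R ^ 2)) /
        (κ * P * A / (16 * Real.pi) * (1 + d / Real.sqrt (d ^ 2 + R ^ 2)) *
            (1 / d ^ 2 + 1 / (d ^ 2 + R ^ 2)) + σ2))
    (hfeas : δmin * (1 - Υ) < 1)
    (Rlb2 : ℝ) (hRlb2 : Rlb2 = d ^ 2 * (1 / (1 + δmin * Υ - δmin) ^ 2 - 1)) :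
    ∀ R : ℝ, 0 ≤ R → γ₀ ≤ γ R → Rlb2 ≤ R ^ 2 := by
  intro R hR hγle
  have hπ : (0:ℝ) < Real.pi := Real.pi_pos
  -- facts about s₀ = √(d² + R₀²)
  obtain ⟨s₀, hs₀def⟩ : ∃ s₀, s₀ = Real.sqrt (d ^ 2 + R₀ ^ 2) := ⟨_, rfl⟩
  have hs₀pos : 0 < s₀ := hs₀def ▸ Real.sqrt_pos.mpr (by positivity)
  have hs₀d : d ≤ s₀ := by
    rw [hs₀def]
    calc d = Real.sqrt (d ^ 2) := (Real.sqrt_sq hd.le).symm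
      _ ≤ Real.sqrt (d ^ 2 + R₀ ^ 2) :=
          Real.sqrt_le_sqrt (le_add_of_nonneg_right (sq_nonneg R₀))
  rw [← hs₀def] at hΥ
  have hΥpos : 0 < Υ := hΥ ▸ div_pos hd hs₀pos
  have hΥle : Υ ≤ 1 := by rw [hΥ, div_le_one hs₀pos]; exact hs₀d
  -- facts about s = √(d² + R²)
  obtain ⟨s, hsdef⟩ : ∃ s, s = Real.sqrt (d ^ 2 + R ^ 2) := ⟨_, rfl⟩
  have hspos : 0 < s := hsdef ▸ Real.sqrt_pos.mpr (by positivity)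
  have hssq : s ^ 2 = d ^ 2 + R ^ 2 := hsdef ▸ Real.sq_sqrt (by positivity)
  obtain ⟨u, hudef⟩ : ∃ u, u = d / s := ⟨_, rfl⟩
  have hupos : 0 < u := by rw [hudef]; exact div_pos hd hspos
  -- δmin positive
  have hβminpos : 0 ≤ βmin := by rw [hβmin]; positivity
  have hδminpos : 0 < δmin := by
    rw [hδmin]
    exact div_pos (by linarith only [hβminpos, hσ2]) (by positivity)
  have hδGσ : δmin * (G * σ2) = βmin + σ2 := by
    rw [hδmin]; exact div_mul_cancel₀ _ (by positivity)
  -- atoms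
  obtain ⟨k, hk⟩ : ∃ k, k = κ * P * A / (16 * Real.pi) := ⟨_, rfl⟩
  obtain ⟨a, ha⟩ : ∃ a, a = (1:ℝ) / d ^ 2 := ⟨_, rfl⟩
  obtain ⟨b, hb⟩ : ∃ b, b = (1:ℝ) / (d ^ 2 + R ^ 2) := ⟨_, rfl⟩
  have hk0 : 0 ≤ k := by rw [hk]; positivity
  have ha0 : 0 < a := by rw [ha]; positivity
  have hb0 : 0 < b := by rw [hb]; positivity
  -- denominator of γ R
  obtain ⟨den, hden⟩ : ∃ den, den = k * (1 + u) * (a + b) + σ2 := ⟨_, rfl⟩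
  have hγR : γ R = G * P / 2 * (1 - u) / den := by
    rw [hγ R, ← hsdef, ← hudef, ← hk, ← ha, ← hb, ← hden]
  have hd0 : 0 ≤ k * (1 + u) * (a + b) :=
    mul_nonneg (mul_nonneg hk0 (by linarith only [hupos])) (by linarith only [ha0, hb0])
  have hdenpos : 0 < den := by rw [hden]; linarith only [hd0, hσ2]
  -- den ≥ βmin + σ2
  have hβk : βmin = k * a := by rw [hβmin, hk, ha]; ring
  have hden_ge : βmin + σ2 ≤ den := by
    rw [hβk, hden]
    have hexp : k * (1 + u) * (a + b) = k * a + (k * b + u * (k * a) + u * (k * b)) := by ring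
    have p1 : 0 ≤ k * b := mul_nonneg hk0 hb0.le
    have p2 : 0 ≤ u * (k * a) := mul_nonneg hupos.le (mul_nonneg hk0 ha0.le)
    have p3 : 0 ≤ u * (k * b) := mul_nonneg hupos.le (mul_nonneg hk0 hb0.le)
    linarith only [hexp, p1, p2, p3]
  -- γ₀ * den ≤ GP/2 (1 - u)
  have hkey : γ₀ * den ≤ G * P / 2 * (1 - u) := by
    rw [hγR] at hγle
    exact (le_div_iff₀ hdenpos).mp hγle
  have hγ₀nonneg : 0 ≤ γ₀ := by
    rw [hγ₀]
    exact mul_nonneg (by positivity) (by linarith only [hΥle])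
  have hkey2 : γ₀ * (βmin + σ2) ≤ G * P / 2 * (1 - u) :=
    le_trans (mul_le_mul_of_nonneg_left hden_ge hγ₀nonneg) hkey
  -- derive u ≤ c where c = 1 + δmin*Υ - δmin
  obtain ⟨c, hc⟩ : ∃ c, c = 1 + δmin * Υ - δmin := ⟨_, rfl⟩
  have hcpos : 0 < c := by rw [hc]; linarith only [hfeas]
  have huc : u ≤ c := by
    rw [hγ₀, ← hδGσ] at hkey2
    have h3 : P / (2 * σ2) * (1 - Υ) * (δmin * (G * σ2)) =
        G * P / 2 * (δmin * (1 - Υ)) := by field_simp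
    rw [h3] at hkey2
    have hGP : 0 < G * P / 2 := by positivity
    have h5 : δmin * (1 - Υ) ≤ 1 - u := (mul_le_mul_iff_right₀ hGP).mp hkey2
    rw [hc]; linarith only [h5]
  -- d ≤ c * s, square it
  have hdcs : d ≤ c * s := by
    rw [hudef, div_le_iff₀ hspos] at huc
    linarith only [huc]
  have hsq : d ^ 2 ≤ c ^ 2 * (d ^ 2 + R ^ 2) := by
    have h5 : d * d ≤ (c * s) * (c * s) := mul_self_le_mul_self hd.le hdcs
    calc d ^ 2 = d * d := by ring
      _ ≤ (c * s) * (c * s) := h5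
      _ = c ^ 2 * s ^ 2 := by ring
      _ = c ^ 2 * (d ^ 2 + R ^ 2) := by rw [hssq]
  -- conclude
  rw [hRlb2, ← hc]
  have hc2 : (0:ℝ) < c ^ 2 := by positivity
  have h4 : (1 / c ^ 2) * d ^ 2 ≤ (1 / c ^ 2) * (c ^ 2 * (d ^ 2 + R ^ 2)) :=
    mul_le_mul_of_nonneg_left hsq (by positivity)
  have h6 : (1 / c ^ 2) * (c ^ 2 * (d ^ 2 + R ^ 2)) = d ^ 2 + R ^ 2 := by
    field_simp
  have h7 : d ^ 2 * (1 / c ^ 2 - 1) = (1 / c ^ 2) * d ^ 2 - d ^ 2 := by ring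
  linarith only [h4, h6, h7]
end

section
/- Let d > 0, R₀ > 0 and δ > 1 be real, and set Υ = d/√(d²+R₀²). Then there exists R ≥ 0 with 1 − d/√(d²+R²) ≥ δ·(1 − Υ) if and only if R₀² < d²·( δ²/(δ−1)² − 1 ). -/
/-- Feasibility of matching the ideal-hardware reference (eq. (41)): with
`Υ = d/√(d²+R₀²)` and imperfection factor `δ > 1`, some radius `R ≥ 0` satisfies
`1 − d/√(d²+R²) ≥ δ(1−Υ)` iff `R₀² < d²(δ²/(δ−1)² − 1)`. -/
theorem scaling_feasibility (d R₀ δ : ℝ) (hd : 0 < d) (hR₀ : 0 < R₀) (hδ : 1 < δ)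
    (Υ : ℝ) (hΥ : Υ = d / Real.sqrt (d ^ 2 + R₀ ^ 2)) :
    (∃ R : ℝ, 0 ≤ R ∧ 1 - d / Real.sqrt (d ^ 2 + R ^ 2) ≥ δ * (1 - Υ)) ↔
      R₀ ^ 2 < d ^ 2 * (δ ^ 2 / (δ - 1) ^ 2 - 1) := by
  have hspos : (0:ℝ) < Real.sqrt (d ^ 2 + R₀ ^ 2) := Real.sqrt_pos.2 (by positivity)
  set s := Real.sqrt (d ^ 2 + R₀ ^ 2) with hsdef
  have hs2 : s ^ 2 = d ^ 2 + R₀ ^ 2 := Real.sq_sqrt (by positivity)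
  have hδ1 : (0:ℝ) < δ - 1 := by linarith
  have hds : d / s * s = d := div_mul_cancel₀ d hspos.ne'
  -- key equivalence: δ(1−Υ) < 1 ↔ target inequality
  have key : δ * (1 - Υ) < 1 ↔ R₀ ^ 2 < d ^ 2 * (δ ^ 2 / (δ - 1) ^ 2 - 1) := by
    rw [hΥ]
    constructor
    · intro h
      have h1 : (δ - 1) * s < δ * d := by
        nlinarith [mul_lt_mul_of_pos_right h hspos]
      have hsq : (δ - 1) ^ 2 * (d ^ 2 + R₀ ^ 2) < δ ^ 2 * d ^ 2 := by
        have := mul_self_lt_mul_self (by positivity : (0:ℝ) ≤ (δ - 1) * s) h1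
        nlinarith [hs2]
      rw [div_sub' (by positivity : ((δ:ℝ) - 1) ^ 2 ≠ 0), mul_div_assoc',
        lt_div_iff₀ (by positivity : (0:ℝ) < (δ - 1) ^ 2)]
      nlinarith
    · intro h
      have hsq : (δ - 1) ^ 2 * (d ^ 2 + R₀ ^ 2) < δ ^ 2 * d ^ 2 := by
        rw [div_sub' (by positivity : ((δ:ℝ) - 1) ^ 2 ≠ 0), mul_div_assoc',
          lt_div_iff₀ (by positivity : (0:ℝ) < (δ - 1) ^ 2)] at h
        nlinarith
      have h1 : (δ - 1) * s < δ * d := by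
        by_contra hc
        push_neg at hc
        have h2 := mul_le_mul hc hc (by positivity) (by positivity)
        nlinarith [hs2]
      have h3 : δ - 1 < δ * (d / s) := by
        rw [mul_div_assoc', lt_div_iff₀ hspos]; nlinarith
      nlinarith
  rw [← key]
  constructor
  · rintro ⟨R, hR, hle⟩
    have hsR : (0:ℝ) < Real.sqrt (d ^ 2 + R ^ 2) := Real.sqrt_pos.2 (by positivity)
    have : 0 < d / Real.sqrt (d ^ 2 + R ^ 2) := by positivity
    linarith
  · intro h
    set ε := 1 - δ * (1 - Υ) with hε
    have hεpos : 0 < ε := by linarith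
    have hRpos : 0 < d / ε := div_pos hd hεpos
    refine ⟨d / ε, hRpos.le, ?_⟩
    have hge : d / ε ≤ Real.sqrt (d ^ 2 + (d / ε) ^ 2) := by
      have := Real.sqrt_le_sqrt (show (d / ε) ^ 2 ≤ d ^ 2 + (d / ε) ^ 2 by nlinarith [sq_nonneg d])
      rwa [Real.sqrt_sq hRpos.le] at this
    have hdiv : d / Real.sqrt (d ^ 2 + (d / ε) ^ 2) ≤ d / (d / ε) :=
      div_le_div_of_nonneg_left hd.le hRpos hge
    have heq : d / (d / ε) = ε := by field_simp
    rw [heq] at hdiv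
    linarith
end

section
/- For all real d > 0, A > 0 and 0 ≤ r < R: [ A · ∫_{ρ=r}^{R} 2π·ρ · d²/(16π²·(d²+ρ²)³) dρ ] / [ ∫_{ρ=r}^{R} 2π·ρ · d/(4π·(d²+ρ²)^{3/2}) dρ ] = (d·A/(16π)) · ( 1/√(d²+r²) + 1/√(d²+R²) ) · ( 1/(d²+r²) + 1/(d²+R²) ). -/
/-- Closed form of the annulus distortion ratio (eq. (44)): the ratio of the
fourth-moment channel integral to the second-moment channel integral over an annulus
with inner radius `r` and outer radius `R` equals
`(dA/16π)(1/√(d²+r²) + 1/√(d²+R²))(1/(d²+r²) + 1/(d²+R²))`. -/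
theorem annulus_moment_ratio (d A r R : ℝ) (hd : 0 < d) (hA : 0 < A) (hr : 0 ≤ r)
    (hrR : r < R) :
    (A * ∫ ρ in r..R,
          2 * Real.pi * ρ * (d ^ 2 / (16 * Real.pi ^ 2 * (d ^ 2 + ρ ^ 2) ^ 3))) /
        (∫ ρ in r..R,
          2 * Real.pi * ρ * (d / (4 * Real.pi * (d ^ 2 + ρ ^ 2) ^ ((3 : ℝ) / 2))))
      = d * A / (16 * Real.pi) *
          (1 / Real.sqrt (d ^ 2 + r ^ 2) + 1 / Real.sqrt (d ^ 2 + R ^ 2)) *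
          (1 / (d ^ 2 + r ^ 2) + 1 / (d ^ 2 + R ^ 2)) := by
  have hpi : (0:ℝ) < Real.pi := Real.pi_pos
  have hpos : ∀ ρ : ℝ, 0 < d ^ 2 + ρ ^ 2 := fun ρ => by positivity
  have hg : ∀ ρ : ℝ, HasDerivAt (fun x : ℝ => d ^ 2 + x ^ 2) (2 * ρ) ρ := by
    intro ρ
    simpa using ((hasDerivAt_pow 2 ρ).const_add (d ^ 2))
  -- First integral
  have h1 : (∫ ρ in r..R,
        2 * Real.pi * ρ * (d ^ 2 / (16 * Real.pi ^ 2 * (d ^ 2 + ρ ^ 2) ^ 3)))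
      = (-(d ^ 2 / (32 * Real.pi)) * ((d ^ 2 + R ^ 2) ^ 2)⁻¹)
        - (-(d ^ 2 / (32 * Real.pi)) * ((d ^ 2 + r ^ 2) ^ 2)⁻¹) := by
    apply intervalIntegral.integral_eq_sub_of_hasDerivAt
    · intro ρ _
      have h := (((hg ρ).pow 2).inv (pow_ne_zero 2 (hpos ρ).ne')).const_mul (-(d ^ 2 / (32 * Real.pi)))
      refine h.congr_deriv ?_
      have := hpos ρ
      simp only [Pi.pow_apply]
      field_simp
      ring
    · apply Continuous.intervalIntegrable
      have hne : ∀ ρ : ℝ, (16 * Real.pi ^ 2 * (d ^ 2 + ρ ^ 2) ^ 3) ≠ 0 := fun ρ => by positivity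
      exact (continuous_const.mul continuous_id).mul
        (continuous_const.div (by continuity) hne)
  -- Second integral
  have h2 : (∫ ρ in r..R,
        2 * Real.pi * ρ * (d / (4 * Real.pi * (d ^ 2 + ρ ^ 2) ^ ((3 : ℝ) / 2))))
      = (-(d / 2) * (d ^ 2 + R ^ 2) ^ (-(1 / 2) : ℝ))
        - (-(d / 2) * (d ^ 2 + r ^ 2) ^ (-(1 / 2) : ℝ)) := by
    apply intervalIntegral.integral_eq_sub_of_hasDerivAt
    · intro ρ _
      have h := (((hg ρ).rpow_const (Or.inl (hpos ρ).ne')).const_mul (-(d / 2))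
        : HasDerivAt (fun x : ℝ => -(d / 2) * (d ^ 2 + x ^ 2) ^ (-(1 / 2) : ℝ))
          (-(d / 2) * (2 * ρ * (-(1 / 2) : ℝ) * (d ^ 2 + ρ ^ 2) ^ ((-(1 / 2) : ℝ) - 1))) ρ)
      refine h.congr_deriv ?_
      have hp := hpos ρ
      have hx : ((-(1 / 2) : ℝ) - 1) = -((3:ℝ)/2) := by norm_num
      rw [hx, Real.rpow_neg hp.le]
      have hne : (d ^ 2 + ρ ^ 2) ^ ((3:ℝ)/2) ≠ 0 := (Real.rpow_pos_of_pos hp _).ne'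
      field_simp
      ring
    · apply Continuous.intervalIntegrable
      have hc : Continuous (fun ρ : ℝ => (d ^ 2 + ρ ^ 2) ^ ((3 : ℝ) / 2)) := by
        apply Continuous.rpow_const (by continuity)
        intro x; exact Or.inl (hpos x).ne'
      have hne : ∀ ρ : ℝ, (4 * Real.pi * (d ^ 2 + ρ ^ 2) ^ ((3:ℝ)/2)) ≠ 0 := fun ρ => by
        have := Real.rpow_pos_of_pos (hpos ρ) ((3:ℝ)/2); positivity
      exact (continuous_const.mul continuous_id).mul
        (continuous_const.div (continuous_const.mul hc) hne)
  rw [h1, h2]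
  have hru : (d ^ 2 + r ^ 2) ^ (-(1 / 2) : ℝ) = (Real.sqrt (d ^ 2 + r ^ 2))⁻¹ := by
    rw [Real.rpow_neg (hpos r).le, ← Real.sqrt_eq_rpow]
  have hRu : (d ^ 2 + R ^ 2) ^ (-(1 / 2) : ℝ) = (Real.sqrt (d ^ 2 + R ^ 2))⁻¹ := by
    rw [Real.rpow_neg (hpos R).le, ← Real.sqrt_eq_rpow]
  rw [hru, hRu]
  set s := Real.sqrt (d ^ 2 + r ^ 2) with hsdef
  set S := Real.sqrt (d ^ 2 + R ^ 2) with hSdef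
  have hs : 0 < s := Real.sqrt_pos.2 (hpos r)
  have hS : 0 < S := Real.sqrt_pos.2 (hpos R)
  have hs2 : s ^ 2 = d ^ 2 + r ^ 2 := Real.sq_sqrt (hpos r).le
  have hS2 : S ^ 2 = d ^ 2 + R ^ 2 := Real.sq_sqrt (hpos R).le
  have hlt : d ^ 2 + r ^ 2 < d ^ 2 + R ^ 2 := by nlinarith
  have hsS : s < S := by
    rw [hsdef, hSdef]; exact Real.sqrt_lt_sqrt (hpos r).le hlt
  have hinv : S⁻¹ < s⁻¹ := by gcongr
  have hden : -(d / 2) * S⁻¹ - -(d / 2) * s⁻¹ ≠ 0 := by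
    have : 0 < -(d / 2) * S⁻¹ - -(d / 2) * s⁻¹ := by nlinarith
    exact this.ne'
  rw [div_eq_iff hden, ← hs2, ← hS2]
  field_simp
  ring
end
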